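/- Let y be a formal power series in x over ℚ satisfying the Heun equation x(1−4x)(1−16x)·y″ + (1 − 30x + 128x²)·y′ − 2(1−8x)·y = 0, and let G = y². Then θ(θ(θG)) − 2x·((2θ+1)(5θ² + 5θ + 2))(G) + 64x²·((θ+1)³)(G) = 0, where θ is the Euler operator θh = x·h′, for a polynomial P the expression P(θ)(G) means applying the corresponding polynomial expression in θ to G, and multiplication by x or x² is performed after applying the θ-polynomial. -/

import Mathlib

open PowerSeries

/-- The Euler operator `θh = x·h'` on formal power series over `ℚ`. -/
noncomputable def eulerOp (h : PowerSeries ℚ) : PowerSeries ℚ :=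
  X * derivative ℚ h

/-- Shifted Euler operator `(θ + λ)h = θh + λ·h`. -/
noncomputable def eulerOpShift (lam : ℚ) (h : PowerSeries ℚ) : PowerSeries ℚ :=
  eulerOp h + C lam * h

lemma derivative_natCast_aux (n : ℕ) : derivative ℚ ((n : ℕ) : PowerSeries ℚ) = 0 :=
  Derivation.map_natCast _ _

lemma d2 : derivative ℚ (2 : PowerSeries ℚ) = 0 := by
  rw [show (2 : PowerSeries ℚ) = ((2:ℕ) : PowerSeries ℚ) by norm_num, derivative_natCast_aux]
lemma d4 : derivative ℚ (4 : PowerSeries ℚ) = 0 := by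
  rw [show (4 : PowerSeries ℚ) = ((4:ℕ) : PowerSeries ℚ) by norm_num, derivative_natCast_aux]
lemma d5 : derivative ℚ (5 : PowerSeries ℚ) = 0 := by
  rw [show (5 : PowerSeries ℚ) = ((5:ℕ) : PowerSeries ℚ) by norm_num, derivative_natCast_aux]
lemma d8 : derivative ℚ (8 : PowerSeries ℚ) = 0 := by
  rw [show (8 : PowerSeries ℚ) = ((8:ℕ) : PowerSeries ℚ) by norm_num, derivative_natCast_aux]
lemma d16 : derivative ℚ (16 : PowerSeries ℚ) = 0 := by
  rw [show (16 : PowerSeries ℚ) = ((16:ℕ) : PowerSeries ℚ) by norm_num, derivative_natCast_aux]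
lemma d30 : derivative ℚ (30 : PowerSeries ℚ) = 0 := by
  rw [show (30 : PowerSeries ℚ) = ((30:ℕ) : PowerSeries ℚ) by norm_num, derivative_natCast_aux]
lemma d128 : derivative ℚ (128 : PowerSeries ℚ) = 0 := by
  rw [show (128 : PowerSeries ℚ) = ((128:ℕ) : PowerSeries ℚ) by norm_num, derivative_natCast_aux]

/-- **Symmetric-square step for the Domb–Heun operator.**
If `y` satisfies the Heun equation
`x(1-4x)(1-16x)·y'' + (1-30x+128x²)·y' - 2(1-8x)·y = 0` and `G = y²`, then
`θ³G - 2x·(2θ+1)(5θ²+5θ+2)·G + 64x²·(θ+1)³·G = 0`. -/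
theorem domb_sym2_euler_equation (y G : PowerSeries ℚ)
    (hy : X * (1 - 4 * X) * (1 - 16 * X) * derivative ℚ (derivative ℚ y)
        + (1 - 30 * X + 128 * X ^ 2) * derivative ℚ y
        - 2 * (1 - 8 * X) * y = 0)
    (hG : G = y ^ 2) :
    eulerOp (eulerOp (eulerOp G))
      - 2 * X * (2 * eulerOp (5 * eulerOp (eulerOp G) + 5 * eulerOp G + 2 * G)
          + (5 * eulerOp (eulerOp G) + 5 * eulerOp G + 2 * G))
      + 64 * X ^ 2 * eulerOpShift 1 (eulerOpShift 1 (eulerOpShift 1 G)) = 0 := by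
  have hy' : derivative ℚ (X * (1 - 4 * X) * (1 - 16 * X) * derivative ℚ (derivative ℚ y)
        + (1 - 30 * X + 128 * X ^ 2) * derivative ℚ y
        - 2 * (1 - 8 * X) * y) = 0 := by rw [hy]; exact map_zero _
  subst hG
  simp only [eulerOp, eulerOpShift, map_one, one_mul, Derivation.leibniz,
    Derivation.leibniz_pow, map_add, map_sub, derivative_X,
    d2, d4, d5, d8, d16, d30, d128, derivative_natCast_aux,
    Derivation.map_one_eq_zero, smul_eq_mul, mul_one, mul_zero, zero_mul, add_zero,
    zero_add, sub_zero, nsmul_eq_mul, Nat.cast_ofNat, pow_one] at hy' ⊢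
  linear_combination (2*X*y + 6*X^2*derivative ℚ y) * hy + 2*X^2*y * hy'
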